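/- Let R be a commutative ring, σ: R → R a ring endomorphism, Φ a d×d matrix over R, and n ≥ 1. Let B be the (nd)×(nd) block matrix with d×d blocks given by: B_{i,i+1} = I_d (the d×d identity) for 1 ≤ i ≤ n−1, B_{n,1} = Φ, and all other blocks zero. Then the product B·σ(B)·σ²(B)⋯σ^{n−1}(B), where σ acts entrywise on matrices, is block diagonal, with i-th diagonal block equal to σ^{n−i}(Φ) for 1 ≤ i ≤ n. In particular, if Φ is invertible then this product is invertible. -/

import Mathlib

/-!
STATEMENT 10: Let `R` be a commutative ring, `σ : R → R` a ring endomorphism,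
`Φ` a `d×d` matrix over `R`, and `n ≥ 1`.  Let `B` be the `(nd)×(nd)` block
matrix with `d×d` blocks `B_{i,i+1} = I_d` (`1 ≤ i ≤ n−1`), `B_{n,1} = Φ`, and
all other blocks zero.  Then `B·σ(B)·σ²(B)⋯σ^{n−1}(B)` (σ acting entrywise)
is block diagonal with `i`-th diagonal block `σ^{n−i}(Φ)` (`1 ≤ i ≤ n`;
in the `0`-indexed formulation below the `i`-th diagonal block is
`σ^{n−1−i}(Φ)`).  In particular, if `Φ` is invertible then so is this product.
-/

lemma diag_isUnit {S : Type*} [Ring S] {n : ℕ} {d : Fin n → S}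
    (h : ∀ i, IsUnit (d i)) : IsUnit (Matrix.diagonal d) := by
  choose u hu using h
  refine ⟨⟨Matrix.diagonal d, Matrix.diagonal fun i => ((u i)⁻¹ : Sˣ), ?_, ?_⟩, rfl⟩
  · rw [Matrix.diagonal_mul_diagonal,
      show (fun i => d i * ((u i)⁻¹ : Sˣ)) = fun _ => 1 from
        funext fun i => by rw [← hu, Units.mul_inv], Matrix.diagonal_one]
  · rw [Matrix.diagonal_mul_diagonal,
      show (fun i => ((u i)⁻¹ : Sˣ) * d i) = fun _ => 1 from
        funext fun i => by rw [← hu, Units.inv_mul], Matrix.diagonal_one]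

lemma block_aux {S : Type*} [Ring S] (τ : S →+* S) (n : ℕ) (hn : 0 < n) (Φ : S)
    (B : Matrix (Fin n) (Fin n) S)
    (hB : B = Matrix.of fun i j : Fin n =>
      if (j : ℕ) = (i : ℕ) + 1 then 1
      else if (i : ℕ) = n - 1 ∧ (j : ℕ) = 0 then Φ else 0) :
    ∀ k, k ≤ n → ((List.range k).map fun i => B.map ⇑(τ ^ i)).prod =
      Matrix.of fun i j : Fin n =>
        if (j : ℕ) = (i : ℕ) + k then 1
        else if (i : ℕ) + k = n + (j : ℕ) then (τ ^ (n - 1 - (i : ℕ))) Φ else 0 := by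
  subst hB
  intro k
  induction k with
  | zero =>
    intro _
    ext i j
    simp only [List.range_zero, List.map_nil, List.prod_nil, Matrix.one_apply, Matrix.of_apply]
    have hi := i.2; have hj := j.2
    rcases eq_or_ne i j with rfl | hne
    · simp
    · rw [if_neg hne, if_neg (fun h => hne (Fin.ext (by omega))), if_neg (by omega)]
  | succ k ih =>
    intro hk1
    have hkn : k < n := hk1
    rw [List.range_succ, List.map_append, List.prod_append, ih (le_of_lt hkn),
      List.map_singleton, List.prod_singleton]
    ext i j
    rw [Matrix.mul_apply]
    have hi := i.2; have hj := j.2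
    by_cases hlt : (i : ℕ) + k < n
    · rw [Finset.sum_eq_single (⟨(i : ℕ) + k, hlt⟩ : Fin n)]
      · simp only [Matrix.of_apply, Matrix.map_apply, Fin.val_mk]
        rw [if_pos trivial, one_mul]
        by_cases h1 : (j : ℕ) = (i : ℕ) + k + 1
        · rw [if_pos h1, if_pos (show (j : ℕ) = (i : ℕ) + (k + 1) by omega), map_one]
        · rw [if_neg h1, if_neg (show ¬(j : ℕ) = (i : ℕ) + (k + 1) by omega)]
          by_cases h2 : (i : ℕ) + k = n - 1 ∧ (j : ℕ) = 0
          · rw [if_pos h2, if_pos (by omega), show n - 1 - (i : ℕ) = k by omega]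
          · rw [if_neg h2, map_zero, if_neg (by omega)]
      · intro z _ hz
        have hzv : (z : ℕ) ≠ (i : ℕ) + k := fun h => hz (Fin.ext h)
        have := z.2
        simp only [Matrix.of_apply]
        rw [if_neg hzv, if_neg (by omega), zero_mul]
      · simp
    · rw [Finset.sum_eq_single (⟨(i : ℕ) + k - n, by omega⟩ : Fin n)]
      · simp only [Matrix.of_apply, Matrix.map_apply, Fin.val_mk]
        rw [if_neg (by omega), if_pos (by omega)]
        by_cases h1 : (j : ℕ) = (i : ℕ) + k - n + 1
        · rw [if_pos h1, map_one, mul_one, if_neg (by omega), if_pos (by omega)]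
        · rw [if_neg h1, if_neg (show ¬((i : ℕ) + k - n = n - 1 ∧ (j : ℕ) = 0) by omega),
            map_zero, mul_zero, if_neg (by omega), if_neg (by omega)]
      · intro z _ hz
        have hzv : (z : ℕ) ≠ (i : ℕ) + k - n := fun h => hz (Fin.ext h)
        have := z.2
        simp only [Matrix.of_apply]
        rw [if_neg (by omega), if_neg (by omega), zero_mul]
      · simp

theorem statement10 {R : Type*} [CommRing R] (σ : R →+* R) (d n : ℕ) (hn : 0 < n)
    (Φ : Matrix (Fin d) (Fin d) R)
    (B : Matrix (Fin n × Fin d) (Fin n × Fin d) R)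
    (hB : B = Matrix.of fun x y =>
      if (y.1 : ℕ) = (x.1 : ℕ) + 1 then (1 : Matrix (Fin d) (Fin d) R) x.2 y.2
      else if (x.1 : ℕ) = n - 1 ∧ (y.1 : ℕ) = 0 then Φ x.2 y.2
      else 0) :
    (((List.range n).map fun i => B.map ⇑(σ ^ i)).prod =
      Matrix.of fun x y =>
        if x.1 = y.1 then (Φ.map ⇑(σ ^ (n - 1 - (x.1 : ℕ)))) x.2 y.2 else 0) ∧
    (IsUnit Φ → IsUnit ((List.range n).map fun i => B.map ⇑(σ ^ i)).prod) := by
  classical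
  let τ : Matrix (Fin d) (Fin d) R →+* Matrix (Fin d) (Fin d) R := σ.mapMatrix
  have hτ : ∀ (i : ℕ) (M : Matrix (Fin d) (Fin d) R), (τ ^ i) M = M.map ⇑(σ ^ i) := by
    intro i
    induction i with
    | zero => intro M; simp [Matrix.map_id]
    | succ i ih =>
      intro M
      rw [pow_succ, RingHom.coe_mul, Function.comp_apply, RingHom.mapMatrix_apply, ih,
        Matrix.map_map, pow_succ, RingHom.coe_mul]
  let B' : Matrix (Fin n) (Fin n) (Matrix (Fin d) (Fin d) R) := Matrix.of fun i j : Fin n =>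
    if (j : ℕ) = (i : ℕ) + 1 then 1
    else if (i : ℕ) = n - 1 ∧ (j : ℕ) = 0 then Φ else 0
  let E := Matrix.compRingEquiv (Fin n) (Fin d) R
  have hEB : ∀ i : ℕ, E (B'.map ⇑(τ ^ i)) = B.map ⇑(σ ^ i) := by
    intro i
    ext x y
    rw [hB]
    simp only [E, B', Matrix.compRingEquiv_apply, Matrix.comp_apply, Matrix.map_apply, Matrix.of_apply, hτ]
    split_ifs <;> simp [Matrix.zero_apply]
  have hdiag : ((List.range n).map fun i => B'.map ⇑(τ ^ i)).prod =
      Matrix.diagonal fun i : Fin n => (τ ^ (n - 1 - (i : ℕ))) Φ := by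
    rw [block_aux τ n hn Φ B' rfl n le_rfl]
    ext i j
    have hi := i.2; have hj := j.2
    simp only [Matrix.of_apply, Matrix.diagonal_apply]
    rw [if_neg (by omega)]
    by_cases h : i = j
    · subst h; rw [if_pos (by omega), if_pos rfl]
    · rw [if_neg (fun hh => h (Fin.ext (by omega))), if_neg h]
  have hprod : ((List.range n).map fun i => B.map ⇑(σ ^ i)).prod =
      E (Matrix.diagonal fun i : Fin n => (τ ^ (n - 1 - (i : ℕ))) Φ) := by
    have hlist : ((List.range n).map fun i => B.map ⇑(σ ^ i)) =
        (((List.range n).map fun i => B'.map ⇑(τ ^ i)).map E) := by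
      rw [List.map_map]
      exact List.map_congr_left fun i _ => (hEB i).symm
    rw [hlist, ← map_list_prod E, hdiag]
  constructor
  · rw [hprod]
    ext x y
    simp only [E, Matrix.compRingEquiv_apply, Matrix.comp_apply, Matrix.of_apply, Matrix.diagonal_apply]
    by_cases h : x.1 = y.1
    · rw [if_pos h, if_pos h, hτ]
    · rw [if_neg h, if_neg h, Matrix.zero_apply]
  · intro hΦ
    rw [hprod]
    exact (diag_isUnit fun i => hΦ.map (τ ^ (n - 1 - (i : ℕ)))).map E
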